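/- arXiv:2506.00695 — 2 statements merged into one kernel-verified Lean document; each statement's English description precedes it below -/
import Mathlib

section
/- Let Π_T = Π(v_T) where v_T = (x̂ + v_S)/|x̂ + v_S| with v_S = (x̂+ŷ)/√2. Then R_ẑ(π/4) = Π_T · X, i.e., the T gate equals e^{iπ/8}·Π_T·X up to global phase. -/
open Complex Matrix Kronecker

noncomputable section

/-- Pauli X -/
def PX : Matrix (Fin 2) (Fin 2) ℂ := !![0, 1; 1, 0]
/-- Pauli Y -/
def PY : Matrix (Fin 2) (Fin 2) ℂ := !![0, -I; I, 0]
/-- Pauli Z -/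
def PZ : Matrix (Fin 2) (Fin 2) ℂ := !![1, 0; 0, -1]

/-- the dot product `v · σ` of a real 3-vector with the Pauli vector -/
def pdot (v : Fin 3 → ℝ) : Matrix (Fin 2) (Fin 2) ℂ :=
  (v 0 : ℂ) • PX + (v 1 : ℂ) • PY + (v 2 : ℂ) • PZ

/-- the rotation `R_v(λ) = exp(-i λ (v·σ)/2)` -/
def rot (v : Fin 3 → ℝ) (l : ℝ) : Matrix (Fin 2) (Fin 2) ℂ :=
  NormedSpace.exp ((-(l / 2 : ℝ) * I : ℂ) • pdot v)

/-- the Hermitian π-rotation `Π(v) = i • R_v(π)` -/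
def Pir (v : Fin 3 → ℝ) : Matrix (Fin 2) (Fin 2) ℂ := I • rot v Real.pi

/-- `v` is a unit vector in `ℝ³` -/
def unit3 (v : Fin 3 → ℝ) : Prop := v ⬝ᵥ v = 1

/-- Euclidean norm on `ℝ³` -/
def norm3 (v : Fin 3 → ℝ) : ℝ := Real.sqrt (v ⬝ᵥ v)

/-- the 3×3 rotation by angle `a` about axis `v` (Rodrigues' formula), applied to `w` -/
def rot3 (v : Fin 3 → ℝ) (a : ℝ) (w : Fin 3 → ℝ) : Fin 3 → ℝ :=
  Real.cos a • w + Real.sin a • (crossProduct v w) + ((1 - Real.cos a) * (v ⬝ᵥ w)) • v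

/-- the Hadamard matrix -/
def Hmat : Matrix (Fin 2) (Fin 2) ℂ := (Real.sqrt 2 : ℂ)⁻¹ • !![1, 1; 1, -1]

/-- the axis of Π_S -/
def vS : Fin 3 → ℝ := (Real.sqrt 2)⁻¹ • ![1, 1, 0]

/-- the axis of Π_T -/
def vT : Fin 3 → ℝ := (norm3 (![1, 0, 0] + vS))⁻¹ • (![1, 0, 0] + vS)

lemma diag_fin_two (a b : ℂ) : Matrix.diagonal ![a,b] = !![a,0;0,b] := by
  ext i j; fin_cases i <;> fin_cases j <;> simp [Matrix.diagonal]

lemma exp_diag2 (a b : ℂ) :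
    NormedSpace.exp (!![a,0;0,b] : Matrix (Fin 2) (Fin 2) ℂ)
      = !![Complex.exp a, 0; 0, Complex.exp b] := by
  rw [← diag_fin_two, Matrix.exp_diagonal]
  have h2 : NormedSpace.exp ![a, b] = ![Complex.exp a, Complex.exp b] := by
    rw [Pi.exp_def]; ext i; fin_cases i <;> simp [← Complex.exp_eq_exp_ℂ]
  rw [h2, diag_fin_two]

lemma exp_off (w z : ℂ) (hz : z ≠ 0) :
    NormedSpace.exp !![0, w/z; z*w, 0] =
      !![(Complex.exp w + Complex.exp (-w))/2, (Complex.exp w - Complex.exp (-w))/(2*z);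
         z*(Complex.exp w - Complex.exp (-w))/2, (Complex.exp w + Complex.exp (-w))/2] := by
  have hU : IsUnit (!![1,1;z,-z] : Matrix (Fin 2) (Fin 2) ℂ) := by
    rw [Matrix.isUnit_iff_isUnit_det]
    simp only [Matrix.det_fin_two_of, isUnit_iff_ne_zero]
    intro h; exact hz (by linear_combination -h/2)
  have hinv : (!![1,1;z,-z] : Matrix (Fin 2) (Fin 2) ℂ)⁻¹ = (2*z)⁻¹ • !![z,1;z,-1] := by
    apply Matrix.inv_eq_right_inv
    ext i j
    fin_cases i <;> fin_cases j <;>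
      simp [Matrix.mul_apply, Fin.sum_univ_two] <;> field_simp <;> ring
  have h1 : (!![0, w/z; z*w, 0] : Matrix (Fin 2) (Fin 2) ℂ)
      = !![1,1;z,-z] * Matrix.diagonal ![w,-w] * (!![1,1;z,-z])⁻¹ := by
    rw [hinv, diag_fin_two]
    ext i j
    fin_cases i <;> fin_cases j <;>
      simp [Matrix.mul_apply, Fin.sum_univ_two] <;> field_simp <;> ring
  rw [h1, Matrix.exp_conj _ _ hU, Matrix.exp_diagonal, hinv]
  have h2 : NormedSpace.exp ![w, -w] = ![Complex.exp w, Complex.exp (-w)] := by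
    rw [Pi.exp_def]
    ext i; fin_cases i <;> simp [← Complex.exp_eq_exp_ℂ]
  rw [h2, diag_fin_two]
  ext i j
  fin_cases i <;> fin_cases j <;>
    simp [Matrix.mul_apply, Fin.sum_univ_two] <;> field_simp <;> ring

lemma harg_gen (c s : ℝ) (w z : ℂ) (hz : z ≠ 0) (hzcs : z = (c:ℂ) + s*I)
    (h1 : ((c:ℂ))^2 + ((s:ℂ))^2 = 1) :
    w • pdot ![c, s, 0] = !![0, w/z; z*w, 0] := by
  have hc : w / z = w * ((c:ℂ) - s*I) := by
    rw [div_eq_iff hz, hzcs]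
    linear_combination -w*h1 + w*((s:ℂ))^2*Complex.I_sq
  unfold pdot PX PY PZ
  rw [hc, hzcs]
  ext i j
  fin_cases i <;> fin_cases j <;> simp <;>
    first
      | tauto
      | linear_combination (-2*w)*h1 + 2*w*((s:ℂ))^2*Complex.I_sq
      | linear_combination (2*w)*h1 - 2*w*((s:ℂ))^2*Complex.I_sq
      | ring

lemma vT_eq : vT = ![Real.cos (Real.pi/8), Real.sin (Real.pi/8), 0] := by
  have h2 : Real.sqrt 2 ^ 2 = 2 := Real.sq_sqrt (by norm_num)
  have h2p : (0:ℝ) < Real.sqrt 2 := Real.sqrt_pos.2 (by norm_num)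
  have hD : (![1,0,0] + vS) ⬝ᵥ (![1,0,0] + vS) = 2 + Real.sqrt 2 := by
    simp [vS, dotProduct, Fin.sum_univ_three]
    field_simp
    nlinarith [h2]
  have hDpos : (0:ℝ) < 2 + Real.sqrt 2 := by positivity
  have hsq : Real.sqrt (2 + Real.sqrt 2) ^ 2 = 2 + Real.sqrt 2 := Real.sq_sqrt hDpos.le
  have hsp : (0:ℝ) < Real.sqrt (2 + Real.sqrt 2) := Real.sqrt_pos.2 hDpos
  have hmul : Real.sqrt (2 - Real.sqrt 2) * Real.sqrt (2 + Real.sqrt 2) = Real.sqrt 2 := by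
    rw [← Real.sqrt_mul (by nlinarith : (0:ℝ) ≤ 2 - Real.sqrt 2)]
    congr 1; nlinarith
  funext i
  unfold vT norm3
  rw [hD]
  fin_cases i
  · simp [vS, Real.cos_pi_div_eight]
    rw [eq_div_iff (by norm_num : (2:ℝ) ≠ 0)]
    field_simp
    nlinarith [hsq, h2, hsp, h2p]
  · simp [vS, Real.sin_pi_div_eight]
    rw [eq_div_iff (by norm_num : (2:ℝ) ≠ 0)]
    field_simp
    nlinarith [hsq, h2, hsp, h2p, hmul]
  · simp [vS]

theorem rz_quarter_via_piT : rot ![0, 0, 1] (Real.pi / 4) = Pir vT * PX := by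
  set z : ℂ := Complex.exp ((Real.pi/8 : ℝ) * I) with hzdef
  have hz : z ≠ 0 := Complex.exp_ne_zero _
  have hzcs : z = (Real.cos (Real.pi/8) : ℂ) + (Real.sin (Real.pi/8)) * I := by
    rw [hzdef, Complex.exp_mul_I, Complex.ofReal_cos, Complex.ofReal_sin]
  have hcs1 : ((Real.cos (Real.pi/8) : ℂ))^2 + ((Real.sin (Real.pi/8)) : ℂ)^2 = 1 := by
    norm_cast
    exact Real.cos_sq_add_sin_sq _
  have hz1 : z * ((Real.cos (Real.pi/8) : ℂ) - (Real.sin (Real.pi/8)) * I) = 1 := by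
    rw [hzcs]
    linear_combination hcs1 - ((Real.sin (Real.pi/8)) : ℂ)^2 * Complex.I_sq
  -- LHS
  have e1 : Complex.exp (-((Real.pi/8 : ℝ) : ℂ) * I) = z⁻¹ := by
    rw [hzdef, ← Complex.exp_neg]
    congr 1; ring
  have hL : rot ![0,0,1] (Real.pi/4) = !![z⁻¹, 0; 0, z] := by
    unfold rot
    have harg : ((-(Real.pi/4/2 : ℝ) : ℂ) * I) • pdot ![0,0,1]
        = !![(-((Real.pi/8 : ℝ) : ℂ)) * I, 0; 0, ((Real.pi/8 : ℝ) : ℂ) * I] := by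
      unfold pdot PX PY PZ
      ext i j
      fin_cases i <;> fin_cases j <;> simp <;> push_cast <;> ring
    rw [harg, exp_diag2, e1, hzdef]
  -- RHS
  set w : ℂ := (-(Real.pi/2 : ℝ) : ℂ) * I with hwdef
  have hw1 : Complex.exp w = -I := by
    rw [hwdef, Complex.exp_mul_I, Complex.cos_neg, Complex.sin_neg,
      ← Complex.ofReal_cos, ← Complex.ofReal_sin, Real.cos_pi_div_two, Real.sin_pi_div_two]
    norm_num
  have hw2 : Complex.exp (-w) = I := by
    have hnw : -w = ((Real.pi/2 : ℝ) : ℂ) * I := by rw [hwdef]; ring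
    rw [hnw, Complex.exp_mul_I, ← Complex.ofReal_cos, ← Complex.ofReal_sin,
      Real.cos_pi_div_two, Real.sin_pi_div_two]
    norm_num
  have harg2 : ((-(Real.pi/2 : ℝ) : ℂ) * I) • pdot vT = !![0, w/z; z*w, 0] := by
    rw [vT_eq]
    exact harg_gen _ _ w z hz hzcs hcs1
  have hR : Pir vT * PX = !![z⁻¹, 0; 0, z] := by
    unfold Pir rot
    rw [harg2, exp_off w z hz, hw1, hw2]
    ext i j
    fin_cases i <;> fin_cases j
    · simp [PX, Matrix.mul_apply, Fin.sum_univ_two]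
      field_simp
      linear_combination (-2)*Complex.I_sq
    · simp [PX, Matrix.mul_apply, Fin.sum_univ_two]
    · simp [PX, Matrix.mul_apply, Fin.sum_univ_two]
    · simp [PX, Matrix.mul_apply, Fin.sum_univ_two]
      linear_combination -z*Complex.I_sq
  rw [hL, hR]
end
end

section
/- The relative-phase Toffoli identity: the 8×8 operator (I⊗H⊗I applied to middle qubit) · T†_mid · CNOT(1→2) · T_mid · CNOT(3→2) · T†_mid · CNOT(1→2) · T_mid · (H on middle qubit) equals a Toffoli gate with target on the middle qubit and controls on the outer qubits, up to a diagonal relative-phase matrix Δ (i.e., there exists a diagonal unitary Δ such that the product equals Δ·Toffoli). -/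
open Complex Matrix Kronecker

noncomputable section

def permM (g : (Fin 2 × Fin 2 × Fin 2) → (Fin 2 × Fin 2 × Fin 2)) :
    Matrix (Fin 2 × Fin 2 × Fin 2) (Fin 2 × Fin 2 × Fin 2) ℂ :=
  Matrix.of fun p q => if p = g q then 1 else 0

/-- the T gate -/
def Tg : Matrix (Fin 2) (Fin 2) ℂ := !![1, 0; 0, Complex.exp (I * (Real.pi / 4))]

/-- a single-qubit gate applied to the middle qubit of three -/
def onMid (U : Matrix (Fin 2) (Fin 2) ℂ) :
    Matrix (Fin 2 × Fin 2 × Fin 2) (Fin 2 × Fin 2 × Fin 2) ℂ :=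
  (1 : Matrix (Fin 2) (Fin 2) ℂ) ⊗ₖ (U ⊗ₖ (1 : Matrix (Fin 2) (Fin 2) ℂ))

/-- CNOT with control q₁ and target q₂ -/
def cn12 := permM fun s => (s.1, s.2.1 + s.1, s.2.2)
/-- CNOT with control q₃ and target q₂ -/
def cn32 := permM fun s => (s.1, s.2.1 + s.2.2, s.2.2)
/-- Toffoli with controls q₁, q₃ and target q₂ -/
def toffMid := permM fun s => (s.1, s.2.1 + s.1 * s.2.2, s.2.2)

/-! Auxiliary machinery for the relative-phase Toffoli theorem -/
section RPTaux
set_option maxHeartbeats 1000000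

/-- the projector onto basis state `a` -/
def Pm (a : Fin 2) : Matrix (Fin 2) (Fin 2) ℂ :=
  Matrix.of fun i j => if i = a ∧ j = a then 1 else 0

/-- block matrix built from 2×2 blocks indexed by the outer qubits -/
def blk (f : Fin 2 → Fin 2 → Matrix (Fin 2) (Fin 2) ℂ) :
    Matrix (Fin 2 × Fin 2 × Fin 2) (Fin 2 × Fin 2 × Fin 2) ℂ :=
  ∑ a : Fin 2, ∑ c : Fin 2, Pm a ⊗ₖ (f a c ⊗ₖ Pm c)

def X2 (a : Fin 2) : Matrix (Fin 2) (Fin 2) ℂ := if a = 0 then 1 else PX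

def dphase (a c : Fin 2) : Matrix (Fin 2) (Fin 2) ℂ :=
  if c = 0 then 1 else if a = 0 then !![1,0;0,-1] else !![-I,0;0,I]

def dv : Fin 2 × Fin 2 × Fin 2 → ℂ := fun p =>
  if p.2.2 = 0 then 1
  else if p.1 = 0 then (if p.2.1 = 0 then 1 else -1)
  else (if p.2.1 = 0 then -I else I)

lemma Pm_mul (a b : Fin 2) : Pm a * Pm b = if a = b then Pm a else 0 := by
  fin_cases a <;> fin_cases b <;>
    · ext i j
      fin_cases i <;> fin_cases j <;>
        simp [Pm, Matrix.mul_apply, Fin.sum_univ_two]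

lemma blk_mul (f g : Fin 2 → Fin 2 → Matrix (Fin 2) (Fin 2) ℂ) :
    blk f * blk g = blk fun a c => f a c * g a c := by
  simp only [blk, Fin.sum_univ_two, add_mul, mul_add, ← Matrix.mul_kronecker_mul, Pm_mul]
  norm_num [Matrix.zero_kronecker, Matrix.kronecker_zero]

lemma onMid_blk (U : Matrix (Fin 2) (Fin 2) ℂ) : onMid U = blk fun _ _ => U := by
  ext ⟨a,b,c⟩ ⟨d,e,f⟩
  fin_cases a <;> fin_cases c <;> fin_cases d <;> fin_cases f <;>
    simp [onMid, blk, Pm, Fin.sum_univ_two, Matrix.one_apply, Prod.ext_iff]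

lemma cn12_blk : cn12 = blk fun a _ => X2 a := by
  ext ⟨a,b,c⟩ ⟨d,e,f⟩
  fin_cases a <;> fin_cases b <;> fin_cases c <;> fin_cases d <;> fin_cases e <;> fin_cases f <;>
    simp [cn12, permM, blk, Pm, X2, PX, Fin.sum_univ_two, Matrix.one_apply, Prod.ext_iff]

lemma cn32_blk : cn32 = blk fun _ c => X2 c := by
  ext ⟨a,b,c⟩ ⟨d,e,f⟩
  fin_cases a <;> fin_cases b <;> fin_cases c <;> fin_cases d <;> fin_cases e <;> fin_cases f <;>
    simp [cn32, permM, blk, Pm, X2, PX, Fin.sum_univ_two, Matrix.one_apply, Prod.ext_iff]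

lemma toff_blk : toffMid = blk fun a c => X2 (a * c) := by
  ext ⟨a,b,c⟩ ⟨d,e,f⟩
  fin_cases a <;> fin_cases b <;> fin_cases c <;> fin_cases d <;> fin_cases e <;> fin_cases f <;>
    simp [toffMid, permM, blk, Pm, X2, PX, Fin.sum_univ_two, Matrix.one_apply, Prod.ext_iff]

lemma diag_blk : Matrix.diagonal dv = blk dphase := by
  ext ⟨a,b,c⟩ ⟨d,e,f⟩
  fin_cases a <;> fin_cases b <;> fin_cases c <;> fin_cases d <;> fin_cases e <;> fin_cases f <;>
    simp [dv, dphase, blk, Pm, Fin.sum_univ_two, Matrix.diagonal, Prod.ext_iff]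

lemma he : Complex.exp (I * (Real.pi/4)) * Complex.exp (I * (Real.pi/4)) = I := by
  rw [← Complex.exp_add]
  have : I * (Real.pi/4) + I * (Real.pi/4) = (Real.pi/2 : ℝ) * I := by push_cast; ring
  rw [this, Complex.exp_mul_I]
  simp

lemma hst : (starRingEnd ℂ) (Complex.exp (I * (Real.pi/4))) = -I * Complex.exp (I * (Real.pi/4)) := by
  have hne : Complex.exp (I * (Real.pi/4)) ≠ 0 := Complex.exp_ne_zero _
  apply mul_right_cancel₀ hne
  have h1 : (starRingEnd ℂ) (Complex.exp (I * (Real.pi/4))) = Complex.exp (-(I * (Real.pi/4))) := by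
    rw [← Complex.exp_conj]
    congr 1
    rw [_root_.map_mul, Complex.conj_I, map_div₀, Complex.conj_ofReal, map_ofNat]
    ring
  rw [h1, ← Complex.exp_add, mul_assoc, he]
  norm_num

lemma hs : (Real.sqrt 2 : ℂ) * (Real.sqrt 2 : ℂ) = 2 := by
  norm_cast
  rw [Real.mul_self_sqrt (by norm_num)]

lemma he2' : Complex.exp (I * (Real.pi:ℂ) * (1/4)) ^ 2 = I := by
  rw [show I * (Real.pi:ℂ) * (1/4) = I * ((Real.pi:ℂ)/4) by ring, sq, he]

lemma he4' : Complex.exp (I * (Real.pi:ℂ) * (1/4)) ^ 4 = -1 := by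
  rw [show (4:ℕ) = 2*2 from rfl, pow_mul, he2', Complex.I_sq]

lemma hs2' : ((Real.sqrt 2 : ℝ) : ℂ) ^ 2 = 2 := by rw [sq, hs]
lemma hs4' : ((Real.sqrt 2 : ℝ) : ℂ) ^ 4 = 4 := by
  rw [show (4:ℕ) = 2*2 from rfl, pow_mul, hs2']; norm_num

set_option maxHeartbeats 2000000 in
lemma key (a c : Fin 2) :
    Hmat * Tgᴴ * X2 a * Tg * X2 c * Tgᴴ * X2 a * Tg * Hmat = dphase a c * X2 (a*c) := by
  have hne : (Real.sqrt 2 : ℂ) ≠ 0 := by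
    intro h
    have := hs
    rw [h] at this
    norm_num at this
  fin_cases a <;> fin_cases c <;>
    · ext i j
      fin_cases i <;> fin_cases j <;>
        simp [Hmat, Tg, X2, PX, dphase, Matrix.mul_apply, Fin.sum_univ_two,
            Matrix.conjTranspose_apply, hst, Matrix.one_apply, Matrix.vecMul, dotProduct,
            Matrix.vecHead, Matrix.vecTail] <;>
        field_simp <;> ring_nf <;>
        simp only [he2', he4', hs2', hs4', Complex.I_sq] <;> ring_nf <;>
        simp [Complex.I_sq, he2', he4', hs2', hs4']

lemma dv_unit (p : Fin 2 × Fin 2 × Fin 2) : dv p * (starRingEnd ℂ) (dv p) = 1 := by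
  obtain ⟨a,b,c⟩ := p
  fin_cases a <;> fin_cases b <;> fin_cases c <;> simp [dv]

end RPTaux

theorem relative_phase_toffoli :
    ∃ Δ : Matrix (Fin 2 × Fin 2 × Fin 2) (Fin 2 × Fin 2 × Fin 2) ℂ,
      Δ.IsDiag ∧ Δ ∈ Matrix.unitaryGroup (Fin 2 × Fin 2 × Fin 2) ℂ ∧
      onMid Hmat * onMid Tgᴴ * cn12 * onMid Tg * cn32 * onMid Tgᴴ * cn12 *
          onMid Tg * onMid Hmat = Δ * toffMid := by
  refine ⟨Matrix.diagonal dv, Matrix.isDiag_diagonal dv, ?_, ?_⟩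
  · rw [Matrix.mem_unitaryGroup_iff]
    show _ * Matrix.conjTranspose _ = 1
    rw [Matrix.diagonal_conjTranspose, Matrix.diagonal_mul_diagonal]
    ext p q
    by_cases h : p = q <;>
      simp [Matrix.diagonal_apply, h, Matrix.one_apply, dv_unit]
  · rw [diag_blk, toff_blk, cn12_blk, cn32_blk]
    simp only [onMid_blk, blk_mul]
    exact congrArg blk (funext fun a => funext fun c => key a c)
end
end
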